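/- Let ω, λ, μ ∈ ℂ and (a,b) ∈ ℂ² ∖ {(0,0)} satisfy (ω+λ)a + μb = 0 and μa + (ω−λ)b = 0, and set η(x) = x^μ (a,b). Let f, g : (0,∞) → ℂ² be smooth functions that vanish for all sufficiently large x and satisfy f(x) = c₁ η(x) and g(x) = c₂ η(x) for all 0 < x < x₀, for some c₁, c₂ ∈ ℂ and x₀ > 0. Then x ↦ f(x)ᵀ(D_{ω,λ}g)(x) and x ↦ (D_{ω,λ}f)(x)ᵀ g(x) are integrable on (0,∞) and ∫₀^∞ f(x)ᵀ (D_{ω,λ}g)(x) dx = ∫₀^∞ (D_{ω,λ}f)(x)ᵀ g(x) dx. -/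

import Mathlib

open MeasureTheory

lemma cpow_hasDerivAt (μ : ℂ) {x : ℝ} (hx : 0 < x) :
    HasDerivAt (fun y : ℝ => (y : ℂ) ^ μ) (μ * (x : ℂ) ^ (μ - 1)) x :=
  ((Complex.hasStrictDerivAt_cpow_const (c := μ)
      (x := (x : ℂ)) (Complex.ofReal_mem_slitPlane.2 hx)).hasDerivAt).comp_ofReal

/-- The formal 1-dimensional Dirac-Coulomb operator `D_{ω,λ}`. -/
noncomputable def diracCoulomb (ω lam : ℂ) (f : ℝ → ℂ × ℂ) : ℝ → ℂ × ℂ :=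
  fun x =>
    (-((lam + ω) / (x : ℂ)) * (f x).1 - deriv (fun y => (f y).2) x,
     deriv (fun y => (f y).1) x - ((lam - ω) / (x : ℂ)) * (f x).2)

/-- The operator kills multiples of the zero mode near `0`. -/
lemma dirac_eta (ω lam μ a b c : ℂ)
    (h1 : (ω + lam) * a + μ * b = 0) (h2 : μ * a + (ω - lam) * b = 0)
    (g : ℝ → ℂ × ℂ) (x₀ : ℝ)
    (hgnear : ∀ x ∈ Set.Ioo (0 : ℝ) x₀, g x = (c * (x : ℂ) ^ μ * a, c * (x : ℂ) ^ μ * b)) :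
    ∀ x ∈ Set.Ioo (0 : ℝ) x₀, diracCoulomb ω lam g x = 0 := by
  intro x hx
  have hmem : Set.Ioo (0 : ℝ) x₀ ∈ nhds x := isOpen_Ioo.mem_nhds hx
  have hxC : (x : ℂ) ≠ 0 := Complex.ofReal_ne_zero.2 (ne_of_gt hx.1)
  have hev1 : (fun y => (g y).1) =ᶠ[nhds x] fun y : ℝ => c * (y : ℂ) ^ μ * a := by
    filter_upwards [hmem] with y hy
    rw [hgnear y hy]
  have hev2 : (fun y => (g y).2) =ᶠ[nhds x] fun y : ℝ => c * (y : ℂ) ^ μ * b := by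
    filter_upwards [hmem] with y hy
    rw [hgnear y hy]
  have hd1 : deriv (fun y => (g y).1) x = c * (μ * (x : ℂ) ^ (μ - 1)) * a := by
    rw [hev1.deriv_eq]
    exact (((cpow_hasDerivAt μ hx.1).const_mul c).mul_const a).deriv
  have hd2 : deriv (fun y => (g y).2) x = c * (μ * (x : ℂ) ^ (μ - 1)) * b := by
    rw [hev2.deriv_eq]
    exact (((cpow_hasDerivAt μ hx.1).const_mul c).mul_const b).deriv
  have hμ : (x : ℂ) ^ μ = (x : ℂ) ^ (μ - 1) * x := by
    rw [show μ = (μ - 1) + 1 by ring, Complex.cpow_add _ _ hxC, Complex.cpow_one]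
    ring_nf
  simp only [diracCoulomb, hd1, hd2, hgnear x hx, Prod.mk_eq_zero]
  constructor
  · have e : ((lam + ω) / (x : ℂ)) * (c * (x : ℂ) ^ μ * a)
        = c * (x : ℂ) ^ (μ - 1) * ((lam + ω) * a) := by
      rw [hμ]; field_simp
    rw [neg_mul, e]
    linear_combination (-(c * (x : ℂ) ^ (μ - 1))) * h1
  · have e : ((lam - ω) / (x : ℂ)) * (c * (x : ℂ) ^ μ * b)
        = c * (x : ℂ) ^ (μ - 1) * ((lam - ω) * b) := by
      rw [hμ]; field_simp
    rw [e]
    linear_combination (c * (x : ℂ) ^ (μ - 1)) * h2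

/-- Integrability of a continuous function on `(0,∞)` vanishing off a compact subinterval. -/
lemma integrableOn_of_support_Icc {φ : ℝ → ℂ} {m X : ℝ} (hm : 0 < m)
    (hc : ContinuousOn φ (Set.Ioi 0))
    (h0 : ∀ x ∈ Set.Ioi (0 : ℝ), x ∉ Set.Icc m X → φ x = 0) :
    IntegrableOn φ (Set.Ioi 0) := by
  have hsub : Set.Icc m X ⊆ Set.Ioi 0 := fun x hx => lt_of_lt_of_le hm hx.1
  have hIcc : IntegrableOn φ (Set.Icc m X) :=
    (hc.mono hsub).integrableOn_compact isCompact_Icc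
  have hdiff : IntegrableOn φ (Set.Ioi 0 \ Set.Icc m X) := by
    refine (integrableOn_zero).congr_fun (fun x hx => (h0 x hx.1 hx.2).symm) ?_
    exact measurableSet_Ioi.diff measurableSet_Icc
  exact (hdiff.union hIcc).mono_set fun x hx => by
    by_cases h : x ∈ Set.Icc m X
    exacts [Or.inr h, Or.inl ⟨hx, h⟩]

/-- Self-transposedness of the homogeneous realization with boundary condition `[a:b]`:
for smooth functions equal to multiples of the zero mode `η(x) = x^μ(a,b)` near `0` and
vanishing for large `x`, one has `⟨f|D g⟩ = ⟨D f|g⟩`. -/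
theorem diracCoulomb_self_transposed_boundary (ω lam μ : ℂ)
    (a b : ℂ) (hab : (a, b) ≠ (0, 0))
    (h1 : (ω + lam) * a + μ * b = 0) (h2 : μ * a + (ω - lam) * b = 0)
    (f g : ℝ → ℂ × ℂ)
    (hfsm : ContDiffOn ℝ (⊤ : ℕ∞) f (Set.Ioi 0))
    (hgsm : ContDiffOn ℝ (⊤ : ℕ∞) g (Set.Ioi 0))
    (hfvan : ∃ X : ℝ, ∀ x : ℝ, X ≤ x → f x = 0)
    (hgvan : ∃ X : ℝ, ∀ x : ℝ, X ≤ x → g x = 0)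
    (c₁ c₂ : ℂ) (x₀ : ℝ) (hx₀ : 0 < x₀)
    (hfnear : ∀ x ∈ Set.Ioo (0 : ℝ) x₀, f x = (c₁ * (x : ℂ) ^ μ * a, c₁ * (x : ℂ) ^ μ * b))
    (hgnear : ∀ x ∈ Set.Ioo (0 : ℝ) x₀, g x = (c₂ * (x : ℂ) ^ μ * a, c₂ * (x : ℂ) ^ μ * b)) :
    IntegrableOn
        (fun x => (f x).1 * (diracCoulomb ω lam g x).1 + (f x).2 * (diracCoulomb ω lam g x).2)
        (Set.Ioi 0) ∧
      IntegrableOn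
        (fun x => (diracCoulomb ω lam f x).1 * (g x).1 + (diracCoulomb ω lam f x).2 * (g x).2)
        (Set.Ioi 0) ∧
      (∫ x in Set.Ioi (0 : ℝ),
          ((f x).1 * (diracCoulomb ω lam g x).1 + (f x).2 * (diracCoulomb ω lam g x).2)) =
        ∫ x in Set.Ioi (0 : ℝ),
          ((diracCoulomb ω lam f x).1 * (g x).1 + (diracCoulomb ω lam f x).2 * (g x).2) := by
  obtain ⟨Xf, hXf⟩ := hfvan
  obtain ⟨Xg, hXg⟩ := hgvan
  set X : ℝ := max (max Xf Xg) x₀ with hXdef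
  set m : ℝ := x₀ / 2 with hmdef
  have hm0 : 0 < m := by positivity
  have hmx : m < x₀ := by simp [hmdef]; linarith
  have hx₀X : x₀ ≤ X := le_max_right _ _
  have hmX : m ≤ X := le_trans hmx.le hx₀X
  have hXfX : Xf ≤ X := le_trans (le_max_left _ _) (le_max_left _ _)
  have hXgX : Xg ≤ X := le_trans (le_max_right _ _) (le_max_left _ _)
  -- component smoothness
  have hf1 : ContDiffOn ℝ (⊤ : ℕ∞) (fun y => (f y).1) (Set.Ioi 0) :=
    contDiff_fst.comp_contDiffOn hfsm
  have hf2 : ContDiffOn ℝ (⊤ : ℕ∞) (fun y => (f y).2) (Set.Ioi 0) :=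
    contDiff_snd.comp_contDiffOn hfsm
  have hg1 : ContDiffOn ℝ (⊤ : ℕ∞) (fun y => (g y).1) (Set.Ioi 0) :=
    contDiff_fst.comp_contDiffOn hgsm
  have hg2 : ContDiffOn ℝ (⊤ : ℕ∞) (fun y => (g y).2) (Set.Ioi 0) :=
    contDiff_snd.comp_contDiffOn hgsm
  -- differentiability of components at points of `Ioi 0`
  have hdiffAt : ∀ (F : ℝ → ℂ) (_ : ContDiffOn ℝ (⊤ : ℕ∞) F (Set.Ioi 0)),
      ∀ x ∈ Set.Ioi (0 : ℝ), DifferentiableAt ℝ F x := by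
    intro F hF x hx
    exact (hF.differentiableOn (by simp)).differentiableAt (isOpen_Ioi.mem_nhds hx)
  -- the Wronskian
  set W : ℝ → ℂ := fun x => (f x).2 * (g x).1 - (f x).1 * (g x).2 with hWdef
  have hWsm : ContDiffOn ℝ (⊤ : ℕ∞) W (Set.Ioi 0) := (hf2.mul hg1).sub (hf1.mul hg2)
  have hWderiv : ∀ x ∈ Set.Ioi (0 : ℝ), HasDerivAt W (deriv W x) x := by
    intro x hx
    exact (((hdiffAt _ hf2 x hx).mul (hdiffAt _ hg1 x hx)).sub
      ((hdiffAt _ hf1 x hx).mul (hdiffAt _ hg2 x hx))).hasDerivAt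
  -- pointwise identity  f·Dg = Df·g + W'
  have key : ∀ x ∈ Set.Ioi (0 : ℝ),
      (f x).1 * (diracCoulomb ω lam g x).1 + (f x).2 * (diracCoulomb ω lam g x).2
        = ((diracCoulomb ω lam f x).1 * (g x).1 + (diracCoulomb ω lam f x).2 * (g x).2)
          + deriv W x := by
    intro x hx
    have hW : HasDerivAt W
        (deriv (fun y => (f y).2) x * (g x).1 + (f x).2 * deriv (fun y => (g y).1) x
          - (deriv (fun y => (f y).1) x * (g x).2 + (f x).1 * deriv (fun y => (g y).2) x)) x :=
      (((hdiffAt _ hf2 x hx).hasDerivAt.mul (hdiffAt _ hg1 x hx).hasDerivAt).sub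
        ((hdiffAt _ hf1 x hx).hasDerivAt.mul (hdiffAt _ hg2 x hx).hasDerivAt))
    rw [hW.deriv]
    simp only [diracCoulomb]
    ring
  -- vanishing of D applied to zero-mode multiples near zero
  have hDg0 : ∀ x ∈ Set.Ioo (0 : ℝ) x₀, diracCoulomb ω lam g x = 0 :=
    dirac_eta ω lam μ a b c₂ h1 h2 g x₀ hgnear
  have hDf0 : ∀ x ∈ Set.Ioo (0 : ℝ) x₀, diracCoulomb ω lam f x = 0 :=
    dirac_eta ω lam μ a b c₁ h1 h2 f x₀ hfnear
  -- W vanishes near zero and for large x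
  have hW0near : ∀ x ∈ Set.Ioo (0 : ℝ) x₀, W x = 0 := by
    intro x hx
    simp only [hWdef, hfnear x hx, hgnear x hx]
    ring
  have hderivW0near : ∀ x ∈ Set.Ioo (0 : ℝ) x₀, deriv W x = 0 := by
    intro x hx
    have hev : W =ᶠ[nhds x] fun _ => 0 := by
      filter_upwards [isOpen_Ioo.mem_nhds hx] with y hy
      exact hW0near y hy
    rw [hev.deriv_eq, deriv_const]
  have hderivW0far : ∀ x : ℝ, X < x → deriv W x = 0 := by
    intro x hx
    have hev : W =ᶠ[nhds x] fun _ => 0 := by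
      filter_upwards [isOpen_Ioi.mem_nhds (Set.mem_Ioi.2 hx)] with y hy
      have hfy : f y = 0 := hXf y (le_trans hXfX (le_of_lt hy))
      simp [hWdef, hfy]
    rw [hev.deriv_eq, deriv_const]
  -- support statements
  have hsupp1 : ∀ x ∈ Set.Ioi (0 : ℝ), x ∉ Set.Icc m X →
      (f x).1 * (diracCoulomb ω lam g x).1 + (f x).2 * (diracCoulomb ω lam g x).2 = 0 := by
    intro x hx hxn
    rcases not_and_or.1 hxn with h | h
    · push_neg at h
      have : diracCoulomb ω lam g x = 0 := hDg0 x ⟨hx, lt_trans h hmx⟩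
      rw [this]; simp
    · push_neg at h
      have hfx : f x = 0 := hXf x (le_trans hXfX h.le)
      rw [hfx]; simp
  have hsupp2 : ∀ x ∈ Set.Ioi (0 : ℝ), x ∉ Set.Icc m X →
      (diracCoulomb ω lam f x).1 * (g x).1 + (diracCoulomb ω lam f x).2 * (g x).2 = 0 := by
    intro x hx hxn
    rcases not_and_or.1 hxn with h | h
    · push_neg at h
      have : diracCoulomb ω lam f x = 0 := hDf0 x ⟨hx, lt_trans h hmx⟩
      rw [this]; simp
    · push_neg at h
      have hgx : g x = 0 := hXg x (le_trans hXgX h.le)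
      rw [hgx]; simp
  have hsuppW : ∀ x ∈ Set.Ioi (0 : ℝ), x ∉ Set.Icc m X → deriv W x = 0 := by
    intro x hx hxn
    rcases not_and_or.1 hxn with h | h
    · push_neg at h
      exact hderivW0near x ⟨hx, lt_trans h hmx⟩
    · push_neg at h
      exact hderivW0far x h
  -- continuity of integrands
  have hIoiC : ∀ c : ℂ, ContinuousOn (fun x : ℝ => c / (x : ℂ)) (Set.Ioi 0) := by
    intro c
    exact continuousOn_const.div Complex.continuous_ofReal.continuousOn
      (fun x hx => Complex.ofReal_ne_zero.2 (ne_of_gt hx))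
  have hdf1 : ContinuousOn (deriv (fun y => (f y).1)) (Set.Ioi 0) :=
    hf1.continuousOn_deriv_of_isOpen isOpen_Ioi (by exact_mod_cast le_top)
  have hdf2 : ContinuousOn (deriv (fun y => (f y).2)) (Set.Ioi 0) :=
    hf2.continuousOn_deriv_of_isOpen isOpen_Ioi (by exact_mod_cast le_top)
  have hdg1 : ContinuousOn (deriv (fun y => (g y).1)) (Set.Ioi 0) :=
    hg1.continuousOn_deriv_of_isOpen isOpen_Ioi (by exact_mod_cast le_top)
  have hdg2 : ContinuousOn (deriv (fun y => (g y).2)) (Set.Ioi 0) :=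
    hg2.continuousOn_deriv_of_isOpen isOpen_Ioi (by exact_mod_cast le_top)
  have hcont1 : ContinuousOn
      (fun x => (f x).1 * (diracCoulomb ω lam g x).1 + (f x).2 * (diracCoulomb ω lam g x).2)
      (Set.Ioi 0) := by
    simp only [diracCoulomb]
    exact (hf1.continuousOn.mul
        (((hIoiC (lam + ω)).neg.mul hg1.continuousOn).sub hdg2)).add
      (hf2.continuousOn.mul (hdg1.sub ((hIoiC (lam - ω)).mul hg2.continuousOn)))
  have hcont2 : ContinuousOn
      (fun x => (diracCoulomb ω lam f x).1 * (g x).1 + (diracCoulomb ω lam f x).2 * (g x).2)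
      (Set.Ioi 0) := by
    simp only [diracCoulomb]
    exact (((((hIoiC (lam + ω)).neg.mul hf1.continuousOn).sub hdf2)).mul hg1.continuousOn).add
      ((hdf1.sub ((hIoiC (lam - ω)).mul hf2.continuousOn)).mul hg2.continuousOn)
  have hcontW : ContinuousOn (deriv W) (Set.Ioi 0) :=
    hWsm.continuousOn_deriv_of_isOpen isOpen_Ioi (by exact_mod_cast le_top)
  -- integrability
  have hI1 : IntegrableOn
      (fun x => (f x).1 * (diracCoulomb ω lam g x).1 + (f x).2 * (diracCoulomb ω lam g x).2)
      (Set.Ioi 0) := integrableOn_of_support_Icc hm0 hcont1 hsupp1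
  have hI2 : IntegrableOn
      (fun x => (diracCoulomb ω lam f x).1 * (g x).1 + (diracCoulomb ω lam f x).2 * (g x).2)
      (Set.Ioi 0) := integrableOn_of_support_Icc hm0 hcont2 hsupp2
  have hIW : IntegrableOn (deriv W) (Set.Ioi 0) :=
    integrableOn_of_support_Icc hm0 hcontW hsuppW
  refine ⟨hI1, hI2, ?_⟩
  -- integral of deriv W is zero
  have hIccsub : Set.Icc m X ⊆ Set.Ioi 0 := fun x hx => lt_of_lt_of_le hm0 hx.1
  have hintW : (∫ x in Set.Ioi (0 : ℝ), deriv W x) = 0 := by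
    have step1 : (∫ x in Set.Ioi (0 : ℝ), deriv W x)
        = ∫ x in Set.Ioi (0 : ℝ), Set.indicator (Set.Icc m X) (deriv W) x := by
      refine setIntegral_congr_fun measurableSet_Ioi ?_
      intro x hx
      by_cases h : x ∈ Set.Icc m X
      · rw [Set.indicator_of_mem h]
      · rw [Set.indicator_of_notMem h, hsuppW x hx h]
    rw [step1, setIntegral_indicator measurableSet_Icc,
      Set.inter_eq_self_of_subset_right hIccsub,
      MeasureTheory.integral_Icc_eq_integral_Ioc,
      ← intervalIntegral.integral_of_le hmX]
    have hFTC : (∫ x in m..X, deriv W x) = W X - W m := by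
      refine intervalIntegral.integral_eq_sub_of_hasDerivAt (fun x hx => ?_) ?_
      · rw [Set.uIcc_of_le hmX] at hx
        exact hWderiv x (hIccsub hx)
      · refine (hcontW.mono ?_).intervalIntegrable
        rw [Set.uIcc_of_le hmX]
        exact hIccsub
    rw [hFTC, hW0near m ⟨hm0, hmx⟩]
    have hWX : W X = 0 := by
      have hfX : f X = 0 := hXf X hXfX
      simp [hWdef, hfX]
    rw [hWX]; ring
  calc (∫ x in Set.Ioi (0 : ℝ),
        ((f x).1 * (diracCoulomb ω lam g x).1 + (f x).2 * (diracCoulomb ω lam g x).2))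
      = ∫ x in Set.Ioi (0 : ℝ),
        (((diracCoulomb ω lam f x).1 * (g x).1 + (diracCoulomb ω lam f x).2 * (g x).2)
          + deriv W x) := setIntegral_congr_fun measurableSet_Ioi key
    _ = (∫ x in Set.Ioi (0 : ℝ),
          ((diracCoulomb ω lam f x).1 * (g x).1 + (diracCoulomb ω lam f x).2 * (g x).2))
        + ∫ x in Set.Ioi (0 : ℝ), deriv W x := integral_add hI2 hIW
    _ = ∫ x in Set.Ioi (0 : ℝ),
          ((diracCoulomb ω lam f x).1 * (g x).1 + (diracCoulomb ω lam f x).2 * (g x).2) := by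
        rw [hintW, add_zero]
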